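/- arXiv:1703.05183 — 2 statements merged into one kernel-verified Lean document; each statement's English description precedes it below -/
import Mathlib

section
/- Let α > 0 and β > 1, let m = m(β) be the unique strictly positive solution of tanh(βm) = m, and let ν_N be the de Finetti measure. Then there exist constants C, δ > 0 such that for all N ∈ ℕ: ν_N([−m/2, m/2]) ≤ C·e^{−δ N^α}. -/
open MeasureTheory Real Filter Set
open scoped ENNReal Topology

set_option maxHeartbeats 1000000

/-- The function `F_β`. -/
noncomputable def Fbeta (β t : ℝ) : ℝ :=
  1 / β * (1 / 2 * Real.log ((1 + t) / (1 - t))) ^ 2 + Real.log (1 - t ^ 2)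

/-- The normalizing constant `Z_N = ∫_{-1}^1 e^{-x F_β(t)/2}/(1-t²) dt` (with `x = N^α`). -/
noncomputable def Zconst (β x : ℝ) : ℝ :=
  ∫ t in Set.Ioo (-1 : ℝ) 1, Real.exp (-(x * Fbeta β t) / 2) / (1 - t ^ 2)

/-- The de Finetti measure `ν_N` with density proportional to `e^{-N^α F_β(t)/2}/(1-t²)`. -/
noncomputable def nuN (α β : ℝ) (N : ℕ) : Measure ℝ :=
  (ENNReal.ofReal (Zconst β ((N : ℝ) ^ α)))⁻¹ •
    ((volume.restrict (Set.Ioo (-1 : ℝ) 1)).withDensity fun t =>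
      ENNReal.ofReal (Real.exp (-((N : ℝ) ^ α * Fbeta β t) / 2) / (1 - t ^ 2)))

/-! ### Auxiliary lemmas -/

lemma hasDerivAt_atanh {t : ℝ} (h1 : -1 < t) (h2 : t < 1) :
    HasDerivAt (fun s : ℝ => 1 / 2 * Real.log ((1 + s) / (1 - s))) (1 / (1 - t ^ 2)) t := by
  have hp : (0:ℝ) < 1 + t := by linarith
  have hq : (0:ℝ) < 1 - t := by linarith
  have h12 : (0:ℝ) < 1 - t ^ 2 := by nlinarith
  have d1 : HasDerivAt (fun s : ℝ => 1 + s) 1 t := by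
    simpa using (hasDerivAt_id t).const_add (1:ℝ)
  have d2 : HasDerivAt (fun s : ℝ => 1 - s) (-1) t := by
    simpa using (hasDerivAt_id t).const_sub (1:ℝ)
  have l1 := d1.log hp.ne'
  have l2 := d2.log hq.ne'
  have hA : HasDerivAt (fun s : ℝ => 1 / 2 * (Real.log (1 + s) - Real.log (1 - s)))
      (1 / 2 * (1 / (1 + t) - -1 / (1 - t))) t := (l1.sub l2).const_mul (1/2 : ℝ)
  have heq : (fun s : ℝ => 1 / 2 * Real.log ((1 + s) / (1 - s)))
      =ᶠ[𝓝 t] fun s : ℝ => 1 / 2 * (Real.log (1 + s) - Real.log (1 - s)) := by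
    filter_upwards [Ioo_mem_nhds h1 h2] with s hs
    rw [Real.log_div (by linarith [hs.1] : (0:ℝ) < 1 + s).ne'
      (by linarith [hs.2] : (0:ℝ) < 1 - s).ne']
  have hval : 1 / 2 * (1 / (1 + t) - -1 / (1 - t)) = 1 / (1 - t ^ 2) := by
    field_simp
    ring
  rw [← hval]
  exact hA.congr_of_eventuallyEq heq

lemma hasDerivAt_Fbeta (β : ℝ) {t : ℝ} (h1 : -1 < t) (h2 : t < 1) :
    HasDerivAt (Fbeta β)
      (2 / (1 - t ^ 2) * (1 / β * (1 / 2 * Real.log ((1 + t) / (1 - t))) - t)) t := by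
  have h12 : (0:ℝ) < 1 - t ^ 2 := by nlinarith
  have hA := hasDerivAt_atanh h1 h2
  have hsq := hA.pow 2
  have hlog : HasDerivAt (fun s : ℝ => Real.log (1 - s ^ 2)) (-(2 * t) / (1 - t ^ 2)) t := by
    have d : HasDerivAt (fun s : ℝ => 1 - s ^ 2) (-(2 * t)) t := by
      simpa using (hasDerivAt_pow 2 t).const_sub (1:ℝ)
    exact d.log h12.ne'
  have H := (hsq.const_mul (1/β)).add hlog
  have hshape : HasDerivAt (fun s : ℝ =>
      1 / β * (1 / 2 * Real.log ((1 + s) / (1 - s))) ^ 2 + Real.log (1 - s ^ 2))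
      (1 / β * (↑2 * (1 / 2 * Real.log ((1 + t) / (1 - t))) ^ (2 - 1) * (1 / (1 - t ^ 2)))
        + -(2 * t) / (1 - t ^ 2)) t := H
  have hval : 1 / β * (↑2 * (1 / 2 * Real.log ((1 + t) / (1 - t))) ^ (2 - 1) * (1 / (1 - t ^ 2)))
        + -(2 * t) / (1 - t ^ 2)
      = 2 / (1 - t ^ 2) * (1 / β * (1 / 2 * Real.log ((1 + t) / (1 - t))) - t) := by
    rcases eq_or_ne β 0 with hb | hb
    · simp [hb]
      ring
    · field_simp
      ring
  rw [← hval]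
  exact hshape

lemma tanh_log_identity (y m : ℝ) (h : Real.tanh y = m) :
    -1 < m ∧ m < 1 ∧ 1 / 2 * Real.log ((1 + m) / (1 - m)) = y := by
  have hc : 0 < Real.cosh y := Real.cosh_pos y
  have hm : m * Real.cosh y = Real.sinh y := by
    rw [← h, Real.tanh_eq_sinh_div_cosh]
    field_simp
  have e1 : Real.cosh y + Real.sinh y = Real.exp y := Real.cosh_add_sinh y
  have e2 : Real.cosh y - Real.sinh y = Real.exp (-y) := Real.cosh_sub_sinh y
  have hep : 0 < Real.exp y := Real.exp_pos y
  have hen : 0 < Real.exp (-y) := Real.exp_pos _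
  have h1m : 1 + m = Real.exp y / Real.cosh y := by
    rw [eq_div_iff hc.ne']
    nlinarith
  have h2m : 1 - m = Real.exp (-y) / Real.cosh y := by
    rw [eq_div_iff hc.ne']
    nlinarith
  have hm1 : -1 < m := by nlinarith [div_pos hep hc]
  have hm2 : m < 1 := by nlinarith [div_pos hen hc]
  refine ⟨hm1, hm2, ?_⟩
  have hratio : (1 + m) / (1 - m) = Real.exp (y - -y) := by
    rw [h1m, h2m, Real.exp_sub]
    field_simp
  rw [hratio, Real.log_exp]
  ring

lemma atanh_lt (β m : ℝ) (hβ : 1 < β) (hm : 0 < m) (hm1 : m < 1)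
    (hAm : 1 / 2 * Real.log ((1 + m) / (1 - m)) = β * m) :
    ∀ t : ℝ, 0 < t → t < m → 1 / 2 * Real.log ((1 + t) / (1 - t)) < β * t := by
  have hβ0 : (0:ℝ) < β := by linarith
  set h : ℝ → ℝ := fun s => β * s - 1 / 2 * Real.log ((1 + s) / (1 - s)) with hh
  have hderiv : ∀ s : ℝ, -1 < s → s < 1 → HasDerivAt h (β - 1 / (1 - s ^ 2)) s := by
    intro s u v
    have base := ((hasDerivAt_id s).const_mul β).sub (hasDerivAt_atanh u v)
    have e : β - 1 / (1 - s ^ 2) = β * 1 - 1 / (1 - s ^ 2) := by ring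
    rw [hh, e]
    exact base
  have h1β : (0:ℝ) < 1 - 1/β := by
    have : 1/β < 1 := by rw [div_lt_one hβ0]; linarith
    linarith
  have hβinv : (0:ℝ) < 1/β := by positivity
  set c : ℝ := Real.sqrt (1 - 1/β) with hcdef
  have hc2 : c ^ 2 = 1 - 1/β := Real.sq_sqrt h1β.le
  have hcpos : 0 < c := Real.sqrt_pos.2 h1β
  have hc1 : c < 1 := by nlinarith
  have hh0 : h 0 = 0 := by simp [hh]
  have hhm : h m = 0 := by
    simp only [hh]
    rw [hAm]
    ring
  have hmono : StrictMonoOn h (Icc 0 c) := by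
    apply strictMonoOn_of_deriv_pos (convex_Icc 0 c)
    · intro s hs
      exact ((hderiv s (by linarith [hs.1]) (by linarith [hs.2, hc1])).continuousAt).continuousWithinAt
    · intro s hs
      rw [interior_Icc] at hs
      rw [(hderiv s (by linarith [hs.1]) (by linarith [hs.2, hc1])).deriv]
      have hs2 : s ^ 2 < c ^ 2 := by nlinarith [hs.1, hs.2]
      have hgt : 1/β < 1 - s ^ 2 := by rw [hc2] at hs2; linarith
      have h0 : (0:ℝ) < 1 - s ^ 2 := by linarith
      have key : 1 / (1 - s ^ 2) < β := by
        rw [div_lt_iff₀ h0]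
        have hββ : β * (1 / β) = 1 := mul_one_div_cancel hβ0.ne'
        have := mul_lt_mul_of_pos_left hgt hβ0
        linarith
      linarith
  have hanti : StrictAntiOn h (Icc c m) := by
    apply strictAntiOn_of_deriv_neg (convex_Icc c m)
    · intro s hs
      exact ((hderiv s (by linarith [hs.1, hcpos]) (by linarith [hs.2, hm1])).continuousAt).continuousWithinAt
    · intro s hs
      rw [interior_Icc] at hs
      rw [(hderiv s (by linarith [hs.1, hcpos]) (by linarith [hs.2, hm1])).deriv]
      have hs2 : c ^ 2 < s ^ 2 := by nlinarith [hs.1, hs.2, hcpos]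
      have hlt : 1 - s ^ 2 < 1/β := by rw [hc2] at hs2; linarith
      have h0 : (0:ℝ) < 1 - s ^ 2 := by nlinarith [hs.2, hm1, hs.1, hcpos]
      have key : β < 1 / (1 - s ^ 2) := by
        rw [lt_div_iff₀ h0]
        have hββ : β * (1 / β) = 1 := mul_one_div_cancel hβ0.ne'
        have := mul_lt_mul_of_pos_left hlt hβ0
        linarith
      linarith
  have hcm : c < m := by
    by_contra hcon
    push_neg at hcon
    have := hmono ⟨le_refl 0, hcpos.le⟩ ⟨hm.le, hcon⟩ hm
    rw [hh0, hhm] at this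
    exact lt_irrefl 0 this
  intro t ht0 htm
  have hpos : 0 < h t := by
    rcases le_or_gt t c with hcase | hcase
    · have := hmono ⟨le_refl 0, hcpos.le⟩ ⟨ht0.le, hcase⟩ ht0
      rwa [hh0] at this
    · have := hanti ⟨hcase.le, htm.le⟩ ⟨hcm.le, le_refl m⟩ htm
      rwa [hhm] at this
  simp only [hh] at hpos
  linarith

lemma Fbeta_strictAntiOn (β m : ℝ) (hβ : 1 < β) (hm : 0 < m) (hm1 : m < 1)
    (hAm : 1 / 2 * Real.log ((1 + m) / (1 - m)) = β * m) :
    StrictAntiOn (Fbeta β) (Icc 0 m) := by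
  have hβ0 : (0:ℝ) < β := by linarith
  apply strictAntiOn_of_deriv_neg (convex_Icc 0 m)
  · intro t ht
    exact ((hasDerivAt_Fbeta β (by linarith [ht.1]) (by linarith [ht.2, hm1])).continuousAt).continuousWithinAt
  · intro t ht
    rw [interior_Icc] at ht
    have h1 : (-1:ℝ) < t := by linarith [ht.1]
    have h2 : t < 1 := by linarith [ht.2]
    rw [(hasDerivAt_Fbeta β h1 h2).deriv]
    have h12 : (0:ℝ) < 1 - t ^ 2 := by nlinarith
    have hA := atanh_lt β m hβ hm hm1 hAm t ht.1 ht.2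
    apply mul_neg_of_pos_of_neg (by positivity)
    have e : 1/β * (β * t) = t := by field_simp
    have h' := (mul_lt_mul_iff_right₀ (by positivity : (0:ℝ) < 1/β)).2 hA
    rw [e] at h'
    linarith

lemma Fbeta_even (β t : ℝ) : Fbeta β (-t) = Fbeta β t := by
  have h : (1 + -t) / (1 - -t) = ((1 + t) / (1 - t))⁻¹ := by
    rw [inv_div]
    congr 1 <;> ring
  simp only [Fbeta]
  rw [h, Real.log_inv, neg_sq]
  ring

lemma quad_bound (c K u y : ℝ) (hc : 0 < c) (hK : 0 ≤ K) (hy : y ≤ 2 * |u|) :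
    -(c * u ^ 2) + K * y ≤ K ^ 2 / c := by
  rw [le_div_iff₀ hc]
  have h1 : K * y * c ≤ K * (2 * |u|) * c :=
    mul_le_mul_of_nonneg_right (mul_le_mul_of_nonneg_left hy hK) hc.le
  have h2 : c ^ 2 * |u| ^ 2 = c ^ 2 * u ^ 2 := by rw [sq_abs]
  nlinarith [sq_nonneg (c * |u| - K), h1, h2]

lemma g_bound (β x : ℝ) (hβ : 1 < β) (hx : 0 < x) {t : ℝ} (h1 : -1 < t) (h2 : t < 1) :
    Real.exp (-(x * Fbeta β t) / 2) / (1 - t ^ 2)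
      ≤ Real.exp ((x / 2 + 1) ^ 2 / (x / (2 * β))) := by
  have hβ0 : (0:ℝ) < β := by linarith
  have hp : (0:ℝ) < 1 + t := by linarith
  have hq : (0:ℝ) < 1 - t := by linarith
  have h12 : (0:ℝ) < 1 - t ^ 2 := by nlinarith
  set u := 1 / 2 * Real.log ((1 + t) / (1 - t)) with hu
  set L := Real.log (1 - t ^ 2) with hL
  have hgt : Real.exp (-(x * Fbeta β t) / 2) / (1 - t ^ 2)
      = Real.exp (-(x * Fbeta β t) / 2 - L) := by
    rw [Real.exp_sub, hL, Real.exp_log h12]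
  rw [hgt, Real.exp_le_exp]
  have hFb : Fbeta β t = 1 / β * u ^ 2 + L := rfl
  have ha : Real.log (1 - t ^ 2) = Real.log (1 + t) + Real.log (1 - t) := by
    rw [show (1:ℝ) - t ^ 2 = (1 + t) * (1 - t) by ring, Real.log_mul hp.ne' hq.ne']
  have hb : Real.log ((1 + t) / (1 - t)) = Real.log (1 + t) - Real.log (1 - t) :=
    Real.log_div hp.ne' hq.ne'
  have hy : -L ≤ 2 * |u| := by
    rw [hL, ha, hu, hb]
    have habs : 2 * |1 / 2 * (Real.log (1 + t) - Real.log (1 - t))|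
        = |Real.log (1 + t) - Real.log (1 - t)| := by
      rw [abs_mul, abs_of_pos (by norm_num : (0:ℝ) < 1 / 2)]
      ring
    rw [habs]
    rcases le_or_gt 0 t with h | h
    · have h1' : 0 ≤ Real.log (1 + t) := Real.log_nonneg (by linarith)
      have := le_abs_self (Real.log (1 + t) - Real.log (1 - t))
      linarith
    · have h1' : 0 ≤ Real.log (1 - t) := Real.log_nonneg (by linarith)
      have := neg_abs_le (Real.log (1 + t) - Real.log (1 - t))
      linarith
  have hcalc : -(x * (1 / β * u ^ 2 + L)) / 2 - L
      = -(x / (2 * β) * u ^ 2) + (x / 2 + 1) * -L := by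
    field_simp
    ring
  rw [hFb, hcalc]
  have := quad_bound (x / (2 * β)) (x / 2 + 1) u (-L) (by positivity) (by positivity) hy
  linarith

lemma g_integrable (β x : ℝ) (hβ : 1 < β) (hx : 0 < x) :
    IntegrableOn (fun t => Real.exp (-(x * Fbeta β t) / 2) / (1 - t ^ 2))
      (Ioo (-1:ℝ) 1) volume := by
  apply Measure.integrableOn_of_bounded (M := Real.exp ((x / 2 + 1) ^ 2 / (x / (2 * β))))
  case s_finite => exact (measure_Ioo_lt_top : volume (Ioo (-1:ℝ) 1) < ⊤).ne
  case f_mble =>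
    have h1 : Measurable fun t : ℝ => (1 + t) / (1 - t) :=
      (measurable_const.add measurable_id).div (measurable_const.sub measurable_id)
    have h2 : Measurable fun t : ℝ => Real.log ((1 + t) / (1 - t)) :=
      Real.measurable_log.comp h1
    have hF : Measurable (Fbeta β) := by
      show Measurable fun t : ℝ =>
        1 / β * (1 / 2 * Real.log ((1 + t) / (1 - t))) ^ 2 + Real.log (1 - t ^ 2)
      exact (measurable_const.mul ((measurable_const.mul h2).pow_const 2)).add
        (Real.measurable_log.comp (measurable_const.sub (measurable_id.pow_const 2)))
    exact ((Real.measurable_exp.comp ((measurable_const.mul hF).neg.div_const 2)).div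
      (measurable_const.sub (measurable_id.pow_const 2))).aestronglyMeasurable
  case f_bdd =>
    filter_upwards [ae_restrict_mem measurableSet_Ioo] with t ht
    have h12 : (0:ℝ) < 1 - t ^ 2 := by nlinarith [ht.1, ht.2]
    rw [Real.norm_eq_abs, abs_of_nonneg (div_nonneg (Real.exp_pos _).le h12.le)]
    exact g_bound β x hβ hx ht.1 ht.2

/-- For `α > 0`, `β > 1`: there are `C, δ > 0` with `ν_N([-m/2, m/2]) ≤ C e^{-δ N^α}`
for all `N ≥ 1`. -/
theorem nuN_center_bound (α β m : ℝ) (hα : 0 < α) (hβ : 1 < β)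
    (hm : 0 < m) (htanh : Real.tanh (β * m) = m) :
    ∃ C > 0, ∃ δ > 0, ∀ N : ℕ, 1 ≤ N →
      nuN α β N (Set.Icc (-(m / 2)) (m / 2)) ≤
        ENNReal.ofReal (C * Real.exp (-δ * (N : ℝ) ^ α)) := by
  obtain ⟨hm1', hm1, hAm⟩ := tanh_log_identity (β * m) m htanh
  have hβ0 : (0:ℝ) < β := by linarith
  have hanti := Fbeta_strictAntiOn β m hβ hm hm1 hAm
  have hantitone := hanti.antitoneOn
  have hmem2 : m / 2 ∈ Icc (0:ℝ) m := ⟨by linarith, by linarith⟩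
  have hmem3 : 3 * m / 4 ∈ Icc (0:ℝ) m := ⟨by linarith, by linarith⟩
  have hδpos : 0 < (Fbeta β (m / 2) - Fbeta β (3 * m / 4)) / 2 := by
    have := hanti hmem2 hmem3 (by linarith)
    linarith
  have hd2 : (0:ℝ) < 1 - (m / 2) ^ 2 := by nlinarith
  refine ⟨8 / (1 - (m / 2) ^ 2), by positivity,
    (Fbeta β (m / 2) - Fbeta β (3 * m / 4)) / 2, hδpos, ?_⟩
  intro N hN
  have hN0 : (0:ℝ) < N := by
    have : (1:ℝ) ≤ N := by exact_mod_cast hN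
    linarith
  have hx : (0:ℝ) < (N : ℝ) ^ α := Real.rpow_pos_of_pos hN0 α
  set x : ℝ := (N : ℝ) ^ α with hxd
  have hsub1 : Icc (-(m / 2)) (m / 2) ⊆ Ioo (-1:ℝ) 1 := by
    intro t ht
    exact ⟨by linarith [ht.1], by linarith [ht.2]⟩
  have hsub2 : Icc (3 * m / 4) (7 * m / 8) ⊆ Ioo (-1:ℝ) 1 := by
    intro t ht
    exact ⟨by linarith [ht.1], by linarith [ht.2]⟩
  have hInt := g_integrable β x hβ hx
  have hnonneg : 0 ≤ᵐ[volume.restrict (Ioo (-1:ℝ) 1)]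
      fun t => Real.exp (-(x * Fbeta β t) / 2) / (1 - t ^ 2) := by
    filter_upwards [ae_restrict_mem measurableSet_Ioo] with t ht
    exact div_nonneg (Real.exp_pos _).le (by nlinarith [ht.1, ht.2])
  have hZlow : m / 8 * Real.exp (-(x * Fbeta β (3 * m / 4)) / 2) ≤ Zconst β x := by
    have step1 : (∫ t in Icc (3 * m / 4) (7 * m / 8),
        Real.exp (-(x * Fbeta β t) / 2) / (1 - t ^ 2)) ≤ Zconst β x := by
      unfold Zconst
      exact setIntegral_mono_set hInt hnonneg hsub2.eventuallyLE
    have step2 : m / 8 * Real.exp (-(x * Fbeta β (3 * m / 4)) / 2)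
        ≤ ∫ t in Icc (3 * m / 4) (7 * m / 8),
            Real.exp (-(x * Fbeta β t) / 2) / (1 - t ^ 2) := by
      have hmono := setIntegral_mono_on
        (f := fun _ : ℝ => Real.exp (-(x * Fbeta β (3 * m / 4)) / 2))
        (g := fun t => Real.exp (-(x * Fbeta β t) / 2) / (1 - t ^ 2))
        (integrableOn_const measure_Icc_lt_top.ne)
        (hInt.mono_set hsub2) measurableSet_Icc ?_
      · rw [setIntegral_const,
          Real.volume_real_Icc_of_le (by linarith : 3 * m / 4 ≤ 7 * m / 8),
          smul_eq_mul] at hmono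
        have e78 : 7 * m / 8 - 3 * m / 4 = m / 8 := by ring
        rw [e78] at hmono
        exact hmono
      · intro t ht
        have htm : t ∈ Icc (0:ℝ) m := ⟨by linarith [ht.1], by linarith [ht.2]⟩
        have hFle : Fbeta β t ≤ Fbeta β (3 * m / 4) := hantitone hmem3 htm ht.1
        have hexp : Real.exp (-(x * Fbeta β (3 * m / 4)) / 2)
            ≤ Real.exp (-(x * Fbeta β t) / 2) := by
          apply Real.exp_le_exp.2
          have := mul_le_mul_of_nonneg_left hFle hx.le
          linarith
        have hden1 : (0:ℝ) < 1 - t ^ 2 := by nlinarith [ht.1, ht.2]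
        have hden2 : 1 - t ^ 2 ≤ 1 := by nlinarith [ht.1]
        calc Real.exp (-(x * Fbeta β (3 * m / 4)) / 2)
            ≤ Real.exp (-(x * Fbeta β t) / 2) := hexp
          _ ≤ Real.exp (-(x * Fbeta β t) / 2) / (1 - t ^ 2) := by
              rw [le_div_iff₀ hden1]
              nlinarith [Real.exp_pos (-(x * Fbeta β t) / 2)]
    linarith
  have hZpos : 0 < Zconst β x := lt_of_lt_of_le (by positivity) hZlow
  have happ : nuN α β N (Icc (-(m / 2)) (m / 2)) = (ENNReal.ofReal (Zconst β x))⁻¹ *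
      ∫⁻ t in Icc (-(m / 2)) (m / 2),
        ENNReal.ofReal (Real.exp (-(x * Fbeta β t) / 2) / (1 - t ^ 2)) := by
    rw [nuN, ← hxd, Measure.smul_apply, smul_eq_mul,
      withDensity_apply _ measurableSet_Icc,
      Measure.restrict_restrict measurableSet_Icc, inter_eq_left.mpr hsub1]
  have hbound : (∫⁻ t in Icc (-(m / 2)) (m / 2),
        ENNReal.ofReal (Real.exp (-(x * Fbeta β t) / 2) / (1 - t ^ 2)))
      ≤ ENNReal.ofReal (Real.exp (-(x * Fbeta β (m / 2)) / 2) / (1 - (m / 2) ^ 2))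
          * ENNReal.ofReal m := by
    calc (∫⁻ t in Icc (-(m / 2)) (m / 2),
          ENNReal.ofReal (Real.exp (-(x * Fbeta β t) / 2) / (1 - t ^ 2)))
        ≤ ∫⁻ _ in Icc (-(m / 2)) (m / 2),
            ENNReal.ofReal (Real.exp (-(x * Fbeta β (m / 2)) / 2) / (1 - (m / 2) ^ 2)) := by
          apply setLIntegral_mono measurable_const
          intro t ht
          apply ENNReal.ofReal_le_ofReal
          have habs : |t| ≤ m / 2 := abs_le.2 ⟨by linarith [ht.1], ht.2⟩
          have hFt : Fbeta β (m / 2) ≤ Fbeta β |t| :=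
            hantitone ⟨abs_nonneg t, by linarith⟩ hmem2 habs
          have hFeq : Fbeta β |t| = Fbeta β t := by
            rcases abs_cases t with ⟨h, _⟩ | ⟨h, _⟩
            · rw [h]
            · rw [h]; exact Fbeta_even β t
          rw [hFeq] at hFt
          have hnum : Real.exp (-(x * Fbeta β t) / 2)
              ≤ Real.exp (-(x * Fbeta β (m / 2)) / 2) := by
            apply Real.exp_le_exp.2
            have := mul_le_mul_of_nonneg_left hFt hx.le
            linarith
          have hdent : 1 - (m / 2) ^ 2 ≤ 1 - t ^ 2 := by
            nlinarith [sq_abs t, habs, abs_nonneg t]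
          exact div_le_div₀ (Real.exp_pos _).le hnum hd2 hdent
      _ = ENNReal.ofReal (Real.exp (-(x * Fbeta β (m / 2)) / 2) / (1 - (m / 2) ^ 2))
            * ENNReal.ofReal m := by
          rw [setLIntegral_const, Real.volume_Icc]
          congr 1
          congr 1
          ring
  rw [happ]
  have hC1 : (0:ℝ) ≤ Real.exp (-(x * Fbeta β (m / 2)) / 2) / (1 - (m / 2) ^ 2) := by positivity
  have hZl : (0:ℝ) < m / 8 * Real.exp (-(x * Fbeta β (3 * m / 4)) / 2) := by positivity
  calc (ENNReal.ofReal (Zconst β x))⁻¹ *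
        ∫⁻ t in Icc (-(m / 2)) (m / 2),
          ENNReal.ofReal (Real.exp (-(x * Fbeta β t) / 2) / (1 - t ^ 2))
      ≤ (ENNReal.ofReal (m / 8 * Real.exp (-(x * Fbeta β (3 * m / 4)) / 2)))⁻¹ *
          (ENNReal.ofReal (Real.exp (-(x * Fbeta β (m / 2)) / 2) / (1 - (m / 2) ^ 2))
            * ENNReal.ofReal m) :=
        mul_le_mul' (ENNReal.inv_le_inv' (ENNReal.ofReal_le_ofReal hZlow)) hbound
    _ = ENNReal.ofReal ((Real.exp (-(x * Fbeta β (m / 2)) / 2) / (1 - (m / 2) ^ 2) * m)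
          / (m / 8 * Real.exp (-(x * Fbeta β (3 * m / 4)) / 2))) := by
        rw [← ENNReal.ofReal_mul hC1, ← ENNReal.div_eq_inv_mul,
          ← ENNReal.ofReal_div_of_pos hZl]
    _ ≤ ENNReal.ofReal (8 / (1 - (m / 2) ^ 2) *
          Real.exp (-((Fbeta β (m / 2) - Fbeta β (3 * m / 4)) / 2) * x)) := by
        apply ENNReal.ofReal_le_ofReal
        apply le_of_eq
        have hexp : Real.exp (-(x * Fbeta β (m / 2)) / 2)
            = Real.exp (-((Fbeta β (m / 2) - Fbeta β (3 * m / 4)) / 2) * x)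
              * Real.exp (-(x * Fbeta β (3 * m / 4)) / 2) := by
          rw [← Real.exp_add]
          congr 1
          ring
        set E := Real.exp (-((Fbeta β (m / 2) - Fbeta β (3 * m / 4)) / 2) * x) with hE
        set B := Real.exp (-(x * Fbeta β (3 * m / 4)) / 2) with hB
        have hBpos : 0 < B := Real.exp_pos _
        rw [hexp, div_mul_eq_mul_div, div_div, div_mul_eq_mul_div, div_mul_eq_mul_div,
          div_eq_div_iff
            (mul_pos hd2 (div_pos (mul_pos hm hBpos) (by norm_num))).ne' hd2.ne']
        ring
end

section
/- Let α > 0 and β > 1, let m = m(β) be the unique strictly positive solution of tanh(βm) = m, and let ν_N be the de Finetti measure. Then for every ℓ ∈ ℕ there exists a constant C_ℓ > 0 such that for all N ∈ ℕ: ∫_{m/2}^{1} |t − m|^ℓ dν_N(t) ≤ C_ℓ·N^{−αℓ/2}. -/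
open MeasureTheory Real Filter Set
open scoped ENNReal Topology

set_option linter.unusedSectionVars false
set_option linter.unusedVariables false

lemma my_tanh_lt_one (x : ℝ) : Real.tanh x < 1 := by
  rw [Real.tanh_eq_sinh_div_cosh, div_lt_one (Real.cosh_pos x)]
  exact Real.sinh_lt_cosh x

lemma my_neg_one_lt_tanh (x : ℝ) : -1 < Real.tanh x := by
  rw [Real.tanh_eq_sinh_div_cosh, lt_div_iff₀ (Real.cosh_pos x)]
  nlinarith [Real.cosh_add_sinh x, Real.exp_pos x]

lemma my_one_sub_tanh_sq (x : ℝ) : 1 - Real.tanh x ^ 2 = (Real.cosh x ^ 2)⁻¹ := by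
  have h := Real.cosh_sq_sub_sinh_sq x
  have hc := Real.cosh_pos x
  rw [Real.tanh_eq_sinh_div_cosh, div_pow]
  field_simp
  linarith

lemma my_tanh_sq_lt_one (x : ℝ) : Real.tanh x ^ 2 < 1 := by
  nlinarith [my_tanh_lt_one x, my_neg_one_lt_tanh x]

lemma my_hasDerivAt_tanh (x : ℝ) : HasDerivAt Real.tanh (1 - Real.tanh x ^ 2) x := by
  have hc := (Real.cosh_pos x).ne'
  have h := (Real.hasDerivAt_sinh x).div (Real.hasDerivAt_cosh x) hc
  have : ∀ y, Real.tanh y = Real.sinh y / Real.cosh y := Real.tanh_eq_sinh_div_cosh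
  rw [show (Real.sinh / Real.cosh) = Real.tanh from (funext fun y => (this y).symm)] at h
  refine h.congr_deriv (Eq.symm ?_)
  rw [my_one_sub_tanh_sq]
  have h2 := Real.cosh_sq_sub_sinh_sq x
  field_simp
  nlinarith

lemma my_tanh_strictMono : StrictMono Real.tanh := by
  apply strictMono_of_deriv_pos
  intro x
  rw [(my_hasDerivAt_tanh x).deriv]
  nlinarith [my_tanh_sq_lt_one x]

lemma my_tanh_lipschitz (a b : ℝ) : |Real.tanh a - Real.tanh b| ≤ |a - b| := by
  have := Convex.norm_image_sub_le_of_norm_hasDerivWithin_le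
    (f := Real.tanh) (f' := fun y => 1 - Real.tanh y ^ 2) (s := Set.univ) (C := 1)
    (fun y _ => (my_hasDerivAt_tanh y).hasDerivWithinAt)
    (fun y _ => by
      rw [Real.norm_eq_abs, abs_le]
      refine ⟨by nlinarith [my_tanh_sq_lt_one y], by nlinarith [sq_nonneg (Real.tanh y)]⟩)
    convex_univ (Set.mem_univ b) (Set.mem_univ a)
  simpa using this

noncomputable def myAtanh (t : ℝ) : ℝ := Real.log ((1 + t) / (1 - t)) / 2

lemma my_exp_two_mul_atanh {t : ℝ} (h1 : -1 < t) (h2 : t < 1) :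
    Real.exp (2 * myAtanh t) = (1 + t) / (1 - t) := by
  have ha : (0:ℝ) < 1 + t := by linarith
  have hb : (0:ℝ) < 1 - t := by linarith
  rw [myAtanh, mul_div_cancel₀ _ (two_ne_zero), Real.exp_log (by positivity)]

lemma my_tanh_eq_exp (u : ℝ) :
    Real.tanh u = (Real.exp (2 * u) - 1) / (Real.exp (2 * u) + 1) := by
  have h1 := Real.cosh_add_sinh u
  have h2 := Real.cosh_sub_sinh u
  have hc := Real.cosh_pos u
  have he : Real.exp (2 * u) = Real.exp u * Real.exp u := by
    rw [← Real.exp_add]; ring_nf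
  have hinv : Real.exp u * Real.exp (-u) = 1 := by
    rw [← Real.exp_add]; simp
  have hne : Real.exp (2*u) + 1 > 0 := by positivity
  rw [Real.tanh_eq_sinh_div_cosh, div_eq_div_iff hc.ne' hne.ne']
  nlinarith [Real.exp_pos u, Real.exp_pos (-u)]

lemma my_tanh_atanh {t : ℝ} (h1 : -1 < t) (h2 : t < 1) : Real.tanh (myAtanh t) = t := by
  rw [my_tanh_eq_exp, my_exp_two_mul_atanh h1 h2]
  have h3 : (1:ℝ) - t > 0 := by linarith
  field_simp
  ring

lemma my_atanh_tanh (u : ℝ) : myAtanh (Real.tanh u) = u := by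
  have hc := Real.cosh_pos u
  have h1 : 1 + Real.tanh u = Real.exp u / Real.cosh u := by
    rw [Real.tanh_eq_sinh_div_cosh, ← Real.cosh_add_sinh]; field_simp
  have h2 : 1 - Real.tanh u = Real.exp (-u) / Real.cosh u := by
    rw [Real.tanh_eq_sinh_div_cosh, ← Real.cosh_sub_sinh]; field_simp
  have h3 : (1 + Real.tanh u) / (1 - Real.tanh u) = Real.exp u / Real.exp (-u) := by
    rw [h1, h2]; field_simp
  rw [myAtanh, h3, ← Real.exp_sub, Real.log_exp]
  ring

lemma my_tanh_nonneg {u : ℝ} (h : 0 ≤ u) : 0 ≤ Real.tanh u := by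
  have := my_tanh_strictMono.monotone h
  simpa [Real.tanh_zero] using this

lemma my_image_tanh_Ici (u₀ : ℝ) : Real.tanh '' (Set.Ici u₀) = Set.Ico (Real.tanh u₀) 1 := by
  ext t
  constructor
  · rintro ⟨u, hu, rfl⟩
    exact ⟨my_tanh_strictMono.monotone hu, my_tanh_lt_one u⟩
  · rintro ⟨h1, h2⟩
    have hm1 : -1 < t := lt_of_lt_of_le (my_neg_one_lt_tanh u₀) h1
    refine ⟨myAtanh t, ?_, my_tanh_atanh hm1 h2⟩
    by_contra h
    simp only [Set.mem_Ici, not_le] at h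
    have := my_tanh_strictMono h
    rw [my_tanh_atanh hm1 h2] at this
    exact absurd h1 (not_le.mpr this)

lemma my_image_tanh_univ : Real.tanh '' Set.univ = Set.Ioo (-1 : ℝ) 1 := by
  ext t
  constructor
  · rintro ⟨u, _, rfl⟩
    exact ⟨my_neg_one_lt_tanh u, my_tanh_lt_one u⟩
  · rintro ⟨h1, h2⟩
    exact ⟨myAtanh t, Set.mem_univ _, my_tanh_atanh h1 h2⟩

lemma my_log_cosh_le_abs (u : ℝ) : Real.log (Real.cosh u) ≤ |u| := by
  have h : Real.cosh u ≤ Real.exp |u| := by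
    rw [Real.cosh_eq]
    have h1 : Real.exp u ≤ Real.exp |u| := Real.exp_le_exp.mpr (le_abs_self u)
    have h2 : Real.exp (-u) ≤ Real.exp |u| := Real.exp_le_exp.mpr (neg_le_abs u)
    linarith
  calc Real.log (Real.cosh u) ≤ Real.log (Real.exp |u|) :=
        Real.log_le_log (Real.cosh_pos u) h
    _ = |u| := Real.log_exp _

/-- The function `F_β`. -/
noncomputable def Gaux (β u : ℝ) : ℝ := u ^ 2 / β - 2 * Real.log (Real.cosh u)

lemma my_continuous_tanh : Continuous Real.tanh := by
  have : Real.tanh = fun x => Real.sinh x / Real.cosh x := funext Real.tanh_eq_sinh_div_cosh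
  rw [this]
  exact Real.continuous_sinh.div Real.continuous_cosh (fun x => (Real.cosh_pos x).ne')

lemma my_Fbeta_tanh (β u : ℝ) : Fbeta β (Real.tanh u) = Gaux β u := by
  have h1 : 1 / 2 * Real.log ((1 + Real.tanh u) / (1 - Real.tanh u)) = u := by
    have := my_atanh_tanh u
    rw [myAtanh] at this
    linarith
  rw [Fbeta, h1, Gaux, my_one_sub_tanh_sq, Real.log_inv, Real.log_pow]
  push_cast
  have : Real.log (Real.cosh u) = Real.log (Real.cosh u) := rfl
  ring

lemma my_hasDerivAt_G (β : ℝ) (u : ℝ) :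
    HasDerivAt (Gaux β) (2 * (u / β - Real.tanh u)) u := by
  have hc := (Real.cosh_pos u).ne'
  have h1 : HasDerivAt (fun u : ℝ => u ^ 2 / β) (2 * u / β) u := by
    simpa using (hasDerivAt_pow 2 u).div_const β
  have h2 : HasDerivAt (fun u : ℝ => Real.log (Real.cosh u)) (Real.tanh u) u := by
    have := (Real.hasDerivAt_cosh u).log hc
    simpa [Real.tanh_eq_sinh_div_cosh] using this
  have := h1.sub (h2.const_mul 2)
  exact this.congr_deriv (by ring)

lemma my_continuous_G (β : ℝ) : Continuous (Gaux β) := by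
  apply Continuous.sub
  · exact (continuous_pow 2).div_const β
  · exact continuous_const.mul (Real.continuous_cosh.log (fun x => (Real.cosh_pos x).ne'))

/-- the key inequality: `1/β - (1 - m²) > 0` -/
lemma my_key_ineq (β m : ℝ) (hβ : 1 < β) (hm : 0 < m) (htanh : Real.tanh (β * m) = m) :
    0 < 1 / β - (1 - m ^ 2) := by
  by_contra hcon
  push_neg at hcon
  set p := β * m with hp
  have hp0 : 0 < p := by positivity
  -- ψ s = tanh s - s/β is strictly monotone on [0,p]
  have hψ : StrictMonoOn (fun s => Real.tanh s - s / β) (Set.Icc 0 p) := by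
    apply strictMonoOn_of_deriv_pos (convex_Icc 0 p)
    · exact (my_continuous_tanh.sub (continuous_id.div_const β)).continuousOn
    · intro s hs
      rw [interior_Icc] at hs
      have hd : HasDerivAt (fun s => Real.tanh s - s / β) (1 - Real.tanh s ^ 2 - 1 / β) s := by
        simpa using (my_hasDerivAt_tanh s).fun_sub ((hasDerivAt_id s).div_const β)
      rw [hd.deriv]
      have h1 : Real.tanh s < Real.tanh p := my_tanh_strictMono hs.2
      have h2 : 0 ≤ Real.tanh s := my_tanh_nonneg hs.1.le
      have h3 : Real.tanh s ^ 2 < m ^ 2 := by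
        rw [← htanh]
        exact pow_lt_pow_left₀ h1 h2 two_ne_zero
      nlinarith
  have := hψ (Set.left_mem_Icc.mpr hp0.le) (Set.right_mem_Icc.mpr hp0.le) hp0
  simp only [Real.tanh_zero, htanh] at this
  rw [hp] at this
  have hβ0 : (0:ℝ) < β := by linarith
  field_simp at this
  norm_num at this

lemma my_monoOn {s : Set ℝ} (hs : Convex ℝ s) {f f' : ℝ → ℝ}
    (hd : ∀ u, HasDerivAt f (f' u) u) (h : ∀ u ∈ interior s, 0 ≤ f' u) :
    MonotoneOn f s :=
  monotoneOn_of_deriv_nonneg hs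
    (fun u _ => (hd u).continuousAt.continuousWithinAt)
    (fun u hu => (hd u).differentiableAt.differentiableWithinAt)
    (fun u hu => by rw [(hd u).deriv]; exact h u hu)

lemma my_antiOn {s : Set ℝ} (hs : Convex ℝ s) {f f' : ℝ → ℝ}
    (hd : ∀ u, HasDerivAt f (f' u) u) (h : ∀ u ∈ interior s, f' u ≤ 0) :
    AntitoneOn f s :=
  antitoneOn_of_deriv_nonpos hs
    (fun u _ => (hd u).continuousAt.continuousWithinAt)
    (fun u hu => (hd u).differentiableAt.differentiableWithinAt)
    (fun u hu => by rw [(hd u).deriv]; exact h u hu)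

section Quad
variable {β m : ℝ} (hβ : 1 < β) (hm : 0 < m) (htanh : Real.tanh (β * m) = m)

lemma my_hasDerivAt_g (β : ℝ) (s : ℝ) :
    HasDerivAt (fun s => s / β - Real.tanh s) (1 / β - (1 - Real.tanh s ^ 2)) s := by
  simpa using ((hasDerivAt_id s).div_const β).fun_sub (my_hasDerivAt_tanh s)

include hβ hm htanh

lemma my_m_lt_one : m < 1 := htanh ▸ my_tanh_lt_one (β * m)

lemma my_g_p : β * m / β - Real.tanh (β * m) = 0 := by
  rw [htanh]
  field_simp
  ring

lemma my_g_right_lower {s : ℝ} (hs : β * m ≤ s) :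
    (1 / β - (1 - m ^ 2)) * (s - β * m) ≤ s / β - Real.tanh s := by
  set p := β * m with hp
  set c := 1 / β - (1 - m ^ 2) with hc
  have key : MonotoneOn (fun s => (s / β - Real.tanh s) - c * (s - p)) (Set.Ici p) := by
    apply my_monoOn (convex_Ici p)
      (f' := fun s => (1 / β - (1 - Real.tanh s ^ 2)) - c)
    · intro s
      simpa using (my_hasDerivAt_g β s).fun_sub ((((hasDerivAt_id s).sub_const p).const_mul c))
    · intro s hs
      rw [interior_Ici] at hs
      have h1 : m ≤ Real.tanh s := by
        rw [← htanh]; exact (my_tanh_strictMono (Set.mem_Ioi.mp hs)).le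
      have h2 : m ^ 2 ≤ Real.tanh s ^ 2 := pow_le_pow_left₀ hm.le h1 2
      simp only [hc]
      nlinarith
  have h2 := key (Set.mem_Ici.mpr le_rfl) (Set.mem_Ici.mpr hs) hs
  have h3 := my_g_p hβ hm htanh
  simp only at h2
  rw [← hp] at h3
  have h4 : (s - p) / β = s / β - p / β := sub_div _ _ _
  have h5 : (p - p) / β = p / β - p / β := sub_div _ _ _
  nlinarith

lemma my_G_right_lower {u : ℝ} (hu : β * m ≤ u) :
    Gaux β (β * m) + (1 / β - (1 - m ^ 2)) * (u - β * m) ^ 2 ≤ Gaux β u := by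
  set p := β * m with hp
  set c := 1 / β - (1 - m ^ 2) with hc
  have key : MonotoneOn (fun u => Gaux β u - Gaux β p - c * (u - p) ^ 2) (Set.Ici p) := by
    apply my_monoOn (convex_Ici p)
      (f' := fun u => 2 * (u / β - Real.tanh u) - c * (2 * (u - p)))
    · intro u
      have h1 : HasDerivAt (fun u : ℝ => c * (u - p) ^ 2) (c * (2 * (u - p))) u := by
        simpa using (((hasDerivAt_id u).sub_const p).pow 2).const_mul c
      simpa using ((my_hasDerivAt_G β u).sub_const (Gaux β p)).fun_sub h1
    · intro u hu
      rw [interior_Ici] at hu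
      have h1 := my_g_right_lower hβ hm htanh (Set.mem_Ioi.mp hu).le
      rw [← hp, ← hc] at h1
      have h2 : 0 ≤ u - p := by simp only [Set.mem_Ioi] at hu; linarith
      nlinarith
  have h2 := key (Set.mem_Ici.mpr le_rfl) (Set.mem_Ici.mpr hu) hu
  simp only at h2
  nlinarith [h2]

lemma my_g_right_upper {s : ℝ} (hs : β * m ≤ s) :
    s / β - Real.tanh s ≤ (s - β * m) / β := by
  set p := β * m with hp
  have key : AntitoneOn (fun s => (s / β - Real.tanh s) - (s - p) / β) (Set.Ici p) := by
    apply my_antiOn (convex_Ici p)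
      (f' := fun s => (1 / β - (1 - Real.tanh s ^ 2)) - 1 / β)
    · intro s
      have h1 : HasDerivAt (fun s : ℝ => (s - p) / β) (1 / β) s := by
        simpa using ((hasDerivAt_id s).sub_const p).div_const β
      simpa using (my_hasDerivAt_g β s).fun_sub h1
    · intro s _
      nlinarith [my_tanh_sq_lt_one s]
  have h2 := key (Set.mem_Ici.mpr le_rfl) (Set.mem_Ici.mpr hs) hs
  have h3 := my_g_p hβ hm htanh
  simp only at h2
  rw [← hp] at h3
  have h4 : (s - p) / β = s / β - p / β := sub_div _ _ _
  have h5 : (p - p) / β = p / β - p / β := sub_div _ _ _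
  nlinarith

lemma my_G_right_upper {u : ℝ} (hu : β * m ≤ u) :
    Gaux β u ≤ Gaux β (β * m) + (u - β * m) ^ 2 / β := by
  set p := β * m with hp
  have key : AntitoneOn (fun u => Gaux β u - Gaux β p - (u - p) ^ 2 / β) (Set.Ici p) := by
    apply my_antiOn (convex_Ici p)
      (f' := fun u => 2 * (u / β - Real.tanh u) - 2 * (u - p) / β)
    · intro u
      have h1 : HasDerivAt (fun u : ℝ => (u - p) ^ 2 / β) (2 * (u - p) / β) u := by
        have := (((hasDerivAt_id u).sub_const p).pow 2).div_const β
        simpa using this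
      simpa using ((my_hasDerivAt_G β u).sub_const (Gaux β p)).fun_sub h1
    · intro u hu
      rw [interior_Ici] at hu
      have h1 := my_g_right_upper hβ hm htanh (Set.mem_Ioi.mp hu).le
      rw [← hp] at h1
      have h4 : (u - p) / β = u / β - p / β := sub_div _ _ _
      have h6 : 2 * (u - p) / β = 2 * ((u - p) / β) := by ring
      nlinarith
  have h2 := key (Set.mem_Ici.mpr le_rfl) (Set.mem_Ici.mpr hu) hu
  simp only at h2
  have h5 : (p - p) ^ 2 / β = 0 := by simp
  linarith

-- facts about u₀ = myAtanh (m/2)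
lemma my_u0_pos : 0 < myAtanh (m / 2) := by
  have hm1 := my_m_lt_one hβ hm htanh
  rw [myAtanh]
  have h1 : (0:ℝ) < 1 - m / 2 := by linarith
  have : (1:ℝ) < (1 + m / 2) / (1 - m / 2) := by
    rw [lt_div_iff₀ h1]; linarith
  have := Real.log_pos this
  linarith

lemma my_tanh_u0 : Real.tanh (myAtanh (m / 2)) = m / 2 := by
  have hm1 := my_m_lt_one hβ hm htanh
  exact my_tanh_atanh (by linarith) (by linarith)

lemma my_u0_lt_p : myAtanh (m / 2) < β * m := by
  have := my_tanh_u0 hβ hm htanh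
  by_contra h
  push_neg at h
  have h2 := my_tanh_strictMono.monotone h
  rw [htanh, this] at h2
  linarith

-- convexity chord bound for g on [u₀, p]
lemma my_g_u0_neg : myAtanh (m / 2) / β - Real.tanh (myAtanh (m / 2)) < 0 := by
  set p := β * m with hp
  set u₀ := myAtanh (m / 2) with hu0
  have hu0p := my_u0_lt_p hβ hm htanh
  have hu0pos := my_u0_pos hβ hm htanh
  have hp0 : 0 < p := by positivity
  set g := fun s : ℝ => s / β - Real.tanh s with hg
  have hcv : StrictConvexOn ℝ (Set.Icc 0 p) g := by
    apply StrictMonoOn.strictConvexOn_of_deriv (convex_Icc 0 p)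
    · exact ((continuous_id.div_const β).sub my_continuous_tanh).continuousOn
    · rw [interior_Icc]
      intro a ha b hb hab
      rw [(my_hasDerivAt_g β a).deriv, (my_hasDerivAt_g β b).deriv]
      have h1 : Real.tanh a < Real.tanh b := my_tanh_strictMono hab
      have h2 : 0 ≤ Real.tanh a := my_tanh_nonneg ha.1.le
      nlinarith
  have h0 : g 0 = 0 := by
    show (0:ℝ) / β - Real.tanh 0 = 0
    simp
  have hggp : g p = 0 := by
    have := my_g_p hβ hm htanh
    simpa [hg, hp] using this
  have hmem0 : (0:ℝ) ∈ Set.Icc (0:ℝ) p := Set.left_mem_Icc.mpr hp0.le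
  have hmemp : p ∈ Set.Icc (0:ℝ) p := Set.right_mem_Icc.mpr hp0.le
  have ha : 0 < 1 - u₀ / p := by
    rw [sub_pos, div_lt_one hp0]; exact hu0p
  have hb : 0 < u₀ / p := by positivity
  have hcomb := hcv.2 hmem0 hmemp (hp0.ne) ha hb (by ring)
  have heq : (1 - u₀ / p) • (0:ℝ) + (u₀ / p) • p = u₀ := by
    field_simp
    rw [smul_zero, zero_add, smul_eq_mul, div_mul_cancel₀ _ hp0.ne']
  rw [heq, h0, hggp] at hcomb
  simpa [hg] using (by simpa using hcomb : g u₀ < 0)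

lemma my_g_chord {s : ℝ} (hs : s ∈ Set.Icc (myAtanh (m / 2)) (β * m)) :
    s / β - Real.tanh s ≤
      ((m / 2 - myAtanh (m / 2) / β) / (β * m - myAtanh (m / 2))) * (s - β * m) := by
  set p := β * m with hp
  set u₀ := myAtanh (m / 2) with hu0
  have hu0p := my_u0_lt_p hβ hm htanh
  have hu0pos := my_u0_pos hβ hm htanh
  have hp0 : 0 < p := by positivity
  have htu0 := my_tanh_u0 hβ hm htanh
  set g := fun s : ℝ => s / β - Real.tanh s with hg
  have hcv : ConvexOn ℝ (Set.Icc 0 p) g := by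
    apply MonotoneOn.convexOn_of_deriv (convex_Icc 0 p)
    · exact ((continuous_id.div_const β).sub my_continuous_tanh).continuousOn
    · exact fun u _ => (my_hasDerivAt_g β u).differentiableAt.differentiableWithinAt
    · rw [interior_Icc]
      intro a ha b hb hab
      rw [(my_hasDerivAt_g β a).deriv, (my_hasDerivAt_g β b).deriv]
      have h1 : Real.tanh a ≤ Real.tanh b := my_tanh_strictMono.monotone hab
      have h2 : 0 ≤ Real.tanh a := my_tanh_nonneg ha.1.le
      nlinarith
  have hggp : g p = 0 := by
    have := my_g_p hβ hm htanh
    simpa [hg, hp] using this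
  have hd : 0 < p - u₀ := by linarith
  set a := (p - s) / (p - u₀) with hadef
  set b := (s - u₀) / (p - u₀) with hbdef
  have ha : 0 ≤ a := by
    apply div_nonneg _ hd.le; linarith [hs.2]
  have hb : 0 ≤ b := by
    apply div_nonneg _ hd.le; linarith [hs.1]
  have hab : a + b = 1 := by
    rw [hadef, hbdef, ← add_div, div_eq_one_iff_eq hd.ne']
    ring
  have hmemu0 : u₀ ∈ Set.Icc (0:ℝ) p := ⟨hu0pos.le, hu0p.le⟩
  have hmemp : p ∈ Set.Icc (0:ℝ) p := Set.right_mem_Icc.mpr hp0.le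
  have hcomb := hcv.2 hmemu0 hmemp ha hb hab
  have heq : a • u₀ + b • p = s := by
    simp only [smul_eq_mul, hadef, hbdef]
    rw [div_mul_eq_mul_div, div_mul_eq_mul_div, ← add_div, div_eq_iff hd.ne']
    ring
  rw [heq, hggp] at hcomb
  have hgu0 : g u₀ = u₀ / β - m / 2 := by rw [hg]; simp [hu0, htu0]
  have : g s ≤ a * g u₀ := by simpa using hcomb
  rw [hgu0] at this
  have hfinal : a * (u₀ / β - m / 2) = ((m / 2 - u₀ / β) / (p - u₀)) * (s - p) := by
    rw [hadef]
    ring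
  calc g s ≤ a * (u₀ / β - m / 2) := this
    _ = _ := by rw [hfinal]

lemma my_G_left_lower {u : ℝ} (hu : u ∈ Set.Icc (myAtanh (m / 2)) (β * m)) :
    Gaux β (β * m) +
      ((m / 2 - myAtanh (m / 2) / β) / (β * m - myAtanh (m / 2))) * (u - β * m) ^ 2
      ≤ Gaux β u := by
  set p := β * m with hp
  set u₀ := myAtanh (m / 2) with hu0
  set c₁ := (m / 2 - u₀ / β) / (p - u₀) with hc1
  have key : AntitoneOn (fun u => Gaux β u - Gaux β p - c₁ * (u - p) ^ 2)
      (Set.Icc u₀ p) := by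
    apply my_antiOn (convex_Icc u₀ p)
      (f' := fun u => 2 * (u / β - Real.tanh u) - c₁ * (2 * (u - p)))
    · intro u
      have h1 : HasDerivAt (fun u : ℝ => c₁ * (u - p) ^ 2) (c₁ * (2 * (u - p))) u := by
        simpa using (((hasDerivAt_id u).sub_const p).pow 2).const_mul c₁
      simpa using ((my_hasDerivAt_G β u).sub_const (Gaux β p)).fun_sub h1
    · intro u hu
      rw [interior_Icc] at hu
      have h1 := my_g_chord hβ hm htanh (Set.mem_Icc.mpr ⟨hu.1.le, hu.2.le⟩)
      rw [← hp, ← hu0, ← hc1] at h1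
      nlinarith
  have h2 := key hu (Set.right_mem_Icc.mpr (by linarith [my_u0_lt_p hβ hm htanh])) hu.2
  simp only [sub_self] at h2
  nlinarith [h2]

end Quad

-- substitution on a measurable set
lemma my_subst (s : Set ℝ) (hs : MeasurableSet s) (f : ℝ → ℝ) :
    ∫ t in Real.tanh '' s, f t
      = ∫ u in s, (1 - Real.tanh u ^ 2) * f (Real.tanh u) := by
  rw [integral_image_eq_integral_abs_deriv_smul hs
    (fun u _ => (my_hasDerivAt_tanh u).hasDerivWithinAt) (my_tanh_strictMono.injective.injOn) f]
  refine setIntegral_congr_fun hs (fun u _ => ?_)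
  rw [smul_eq_mul, abs_of_nonneg (by nlinarith [my_tanh_sq_lt_one u] : (0:ℝ) ≤ 1 - Real.tanh u ^ 2)]

lemma my_subst_apply (β x : ℝ) (s : Set ℝ) (hs : MeasurableSet s) (h : ℝ → ℝ) :
    ∫ t in Real.tanh '' s,
        h t * (Real.exp (-(x * Fbeta β t) / 2) / (1 - t ^ 2))
      = ∫ u in s, h (Real.tanh u) * Real.exp (-(x * Gaux β u) / 2) := by
  rw [my_subst s hs]
  refine setIntegral_congr_fun hs (fun u _ => ?_)
  have h1 : (0:ℝ) < 1 - Real.tanh u ^ 2 := by nlinarith [my_tanh_sq_lt_one u]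
  rw [my_Fbeta_tanh]
  field_simp

lemma my_G_global_lower (β u : ℝ) (hβ : 1 < β) :
    u ^ 2 / (2 * β) - 2 * β ≤ Gaux β u := by
  have h1 := my_log_cosh_le_abs u
  have h2 : 0 ≤ (|u| - 2 * β) ^ 2 := sq_nonneg _
  have h3 : u ^ 2 = |u| ^ 2 := (sq_abs u).symm
  rw [Gaux]
  have hβ0 : (0:ℝ) < β := by linarith
  have h4 : (0:ℝ) < 2 * β := by positivity
  have h5 : (0:ℝ) ≤ (|u| - 2 * β) ^ 2 / (2 * β) := by positivity
  have h6 : (|u| - 2 * β) ^ 2 / (2 * β) = u ^ 2 / (2*β) - 2 * |u| + 2 * β := by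
    field_simp
    nlinarith [sq_abs u]
  have h7 : u ^ 2 / β = 2 * (u ^ 2 / (2 * β)) := by ring
  linarith

lemma my_integrable_exp_G (β x : ℝ) (hβ : 1 < β) (hx : 0 < x) :
    Integrable (fun u : ℝ => Real.exp (-(x * Gaux β u) / 2)) := by
  have hβ0 : (0:ℝ) < β := by linarith
  apply Integrable.mono'
    ((integrable_exp_neg_mul_sq (show (0:ℝ) < x / (4 * β) by positivity)).const_mul
      (Real.exp (x * β)))
  · exact (Real.continuous_exp.comp
      ((continuous_const.mul (my_continuous_G β)).neg.div_const 2)).aestronglyMeasurable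
  · refine Eventually.of_forall (fun u => ?_)
    rw [Real.norm_eq_abs, abs_of_nonneg (Real.exp_pos _).le, ← Real.exp_add]
    apply Real.exp_le_exp.mpr
    have h1 := my_G_global_lower β u hβ
    have h2 : u ^ 2 / (2 * β) * x ≤ Gaux β u * x + 2 * β * x := by nlinarith
    have h3 : x / (4 * β) * u ^ 2 = (u ^ 2 / (2 * β) * x) / 2 := by ring
    nlinarith

lemma my_integrable_moment (ℓ : ℕ) {b : ℝ} (hb : 0 < b) :
    Integrable (fun w : ℝ => |w| ^ ℓ * Real.exp (-(b * w ^ 2))) := by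
  have h := (integrable_rpow_mul_exp_neg_mul_sq hb
    (show (-1:ℝ) < (ℓ:ℝ) by
    have : (0:ℝ) ≤ (ℓ:ℝ) := Nat.cast_nonneg _
    linarith)).abs
  apply h.congr
  refine Eventually.of_forall (fun w => ?_)
  simp only [abs_mul, abs_of_nonneg (Real.exp_pos _).le, Real.rpow_natCast, abs_pow, neg_mul]

lemma my_moment_scale (ℓ : ℕ) {b : ℝ} (hb : 0 < b) :
    ∫ v : ℝ, |v| ^ ℓ * Real.exp (-(b * v ^ 2))
      = (Real.sqrt b)⁻¹ ^ (ℓ + 1) * ∫ w : ℝ, |w| ^ ℓ * Real.exp (-(w ^ 2)) := by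
  have hsb : 0 < Real.sqrt b := Real.sqrt_pos.mpr hb
  have key := MeasureTheory.Measure.integral_comp_mul_left
    (fun w => |w| ^ ℓ * Real.exp (-(w ^ 2))) (Real.sqrt b)
  have heq : ∀ v : ℝ, |Real.sqrt b * v| ^ ℓ * Real.exp (-((Real.sqrt b * v) ^ 2))
      = Real.sqrt b ^ ℓ * (|v| ^ ℓ * Real.exp (-(b * v ^ 2))) := by
    intro v
    rw [abs_mul, abs_of_nonneg hsb.le, mul_pow, mul_pow, Real.sq_sqrt hb.le]
    ring
  simp only [heq] at key
  rw [MeasureTheory.integral_const_mul, smul_eq_mul] at key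
  have h2 : (Real.sqrt b)⁻¹ ^ (ℓ + 1) = (Real.sqrt b ^ ℓ)⁻¹ * |(Real.sqrt b)⁻¹| := by
    rw [abs_of_nonneg (by positivity), pow_succ, inv_pow]
  rw [h2, mul_assoc, ← key, ← mul_assoc, inv_mul_cancel₀ (by positivity), one_mul]

lemma my_measurable_rho (β x : ℝ) :
    Measurable (fun t : ℝ => Real.exp (-(x * Fbeta β t) / 2) / (1 - t ^ 2)) := by
  have h1 : Measurable fun t : ℝ => (1 + t) / (1 - t) :=
    (measurable_const.add measurable_id).div (measurable_const.sub measurable_id)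
  have h2 : Measurable fun t : ℝ => 1 - t ^ 2 :=
    measurable_const.sub (measurable_id.pow_const 2)
  have hF : Measurable (Fbeta β) := by
    apply Measurable.add
    · exact (((Real.measurable_log.comp h1).const_mul (1/2)).pow_const 2).const_mul (1/β)
    · exact Real.measurable_log.comp h2
  exact (((hF.const_mul x).neg.div_const 2).exp).div h2


section Main
variable {β m : ℝ} (hβ : 1 < β) (hm : 0 < m) (htanh : Real.tanh (β * m) = m)

include hβ hm htanh

lemma my_Zeq (x : ℝ) :
    Zconst β x = ∫ u : ℝ, Real.exp (-(x * Gaux β u) / 2) := by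
  have h := my_subst_apply β x Set.univ MeasurableSet.univ (fun _ => 1)
  rw [my_image_tanh_univ] at h
  simp only [one_mul] at h
  rw [Zconst, h, Measure.restrict_univ]

lemma my_quad : 0 < min (1 / β - (1 - m ^ 2))
      ((m / 2 - myAtanh (m / 2) / β) / (β * m - myAtanh (m / 2))) ∧
    ∀ u : ℝ, myAtanh (m / 2) ≤ u →
    Gaux β (β * m) + min (1 / β - (1 - m ^ 2))
      ((m / 2 - myAtanh (m / 2) / β) / (β * m - myAtanh (m / 2))) * (u - β * m) ^ 2
      ≤ Gaux β u := by
  set p := β * m with hp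
  set u₀ := myAtanh (m / 2) with hu0
  set c₀ := 1 / β - (1 - m ^ 2) with hc0
  set c₁ := (m / 2 - u₀ / β) / (p - u₀) with hc1
  have hc0pos : 0 < c₀ := my_key_ineq β m hβ hm htanh
  have hu0p : u₀ < p := my_u0_lt_p hβ hm htanh
  have hc1pos : 0 < c₁ := by
    apply div_pos _ (by linarith)
    have := my_g_u0_neg hβ hm htanh
    rw [my_tanh_u0 hβ hm htanh] at this
    linarith
  refine ⟨lt_min hc0pos hc1pos, fun u hu => ?_⟩
  rcases le_total u p with h | h
  · have := my_G_left_lower hβ hm htanh (Set.mem_Icc.mpr ⟨hu, h⟩)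
    rw [← hu0, ← hc1] at this
    have hmin := mul_le_mul_of_nonneg_right (min_le_right c₀ c₁) (sq_nonneg (u - p))
    rw [← hp] at this
    linarith
  · have := my_G_right_lower hβ hm htanh h
    rw [← hc0] at this
    have hmin := mul_le_mul_of_nonneg_right (min_le_left c₀ c₁) (sq_nonneg (u - p))
    rw [← hp] at this
    linarith

lemma my_Z_lower {x : ℝ} (hx : 1 ≤ x) :
    Real.exp (-(1 / (2 * β))) * Real.exp (-(x * Gaux β (β * m)) / 2) * (Real.sqrt x)⁻¹
      ≤ Zconst β x := by
  have hx0 : (0:ℝ) < x := by linarith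
  have hsx : 0 < Real.sqrt x := Real.sqrt_pos.mpr hx0
  set p := β * m with hp
  set s : Set ℝ := Set.Icc p (p + (Real.sqrt x)⁻¹) with hsdef
  have hconst : ∀ u ∈ s, Real.exp (-(1 / (2 * β))) * Real.exp (-(x * Gaux β p) / 2)
      ≤ Real.exp (-(x * Gaux β u) / 2) := by
    intro u hu
    rw [← Real.exp_add]
    apply Real.exp_le_exp.mpr
    have h1 := my_G_right_upper hβ hm htanh hu.1
    rw [← hp] at h1
    have h2 : (u - p) ^ 2 ≤ x⁻¹ := by
      have h3 : 0 ≤ u - p := by linarith [hu.1]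
      have h4 : u - p ≤ (Real.sqrt x)⁻¹ := by linarith [hu.2]
      have := pow_le_pow_left₀ h3 h4 2
      rwa [inv_pow, Real.sq_sqrt hx0.le] at this
    have hβ0 : (0:ℝ) < β := by linarith
    have h5 : Gaux β u ≤ Gaux β p + x⁻¹ / β :=
      h1.trans (by linarith [(div_le_div_iff_of_pos_right hβ0).mpr h2])
    have h6 : x * x⁻¹ = 1 := mul_inv_cancel₀ hx0.ne'
    have h7 : x * Gaux β u ≤ x * (Gaux β p + x⁻¹ / β) :=
      mul_le_mul_of_nonneg_left h5 hx0.le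
    have h8 : x * (Gaux β p + x⁻¹ / β) = x * Gaux β p + x * x⁻¹ / β := by ring
    rw [h8, h6] at h7
    have h9 : 1 / (2 * β) = (1 / β) / 2 := by ring
    linarith
  have key := setIntegral_ge_of_const_le_real (measurableSet_Icc)
    (measure_Icc_lt_top).ne hconst ((my_integrable_exp_G β x hβ hx0).integrableOn)
  have hvol : (volume s).toReal = (Real.sqrt x)⁻¹ := by
    rw [hsdef, Real.volume_Icc, add_sub_cancel_left, ENNReal.toReal_ofReal (inv_nonneg.mpr hsx.le)]
  rw [measureReal_def, hvol] at key
  refine key.trans ?_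
  rw [my_Zeq hβ hm htanh x]
  exact setIntegral_le_integral (my_integrable_exp_G β x hβ hx0)
    (Eventually.of_forall fun u => (Real.exp_pos _).le)

lemma my_Z_pos {x : ℝ} (hx : 1 ≤ x) : 0 < Zconst β x := by
  have hx0 : (0:ℝ) < x := by linarith
  have hsx : 0 < Real.sqrt x := Real.sqrt_pos.mpr hx0
  refine lt_of_lt_of_le ?_ (my_Z_lower hβ hm htanh hx)
  positivity

lemma my_Num_bound (ℓ : ℕ) {x : ℝ} (hx : 1 ≤ x) :
    (∫ u in Set.Ici (myAtanh (m / 2)),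
        |Real.tanh u - m| ^ ℓ * Real.exp (-(x * Gaux β u) / 2))
      ≤ Real.exp (-(x * Gaux β (β * m)) / 2) *
        ((Real.sqrt (x * (min (1 / β - (1 - m ^ 2))
            ((m / 2 - myAtanh (m / 2) / β) / (β * m - myAtanh (m / 2))) / 2)))⁻¹ ^ (ℓ + 1) *
          ∫ w : ℝ, |w| ^ ℓ * Real.exp (-(w ^ 2))) := by
  obtain ⟨hcpos, hquad⟩ := my_quad hβ hm htanh
  set c := min (1 / β - (1 - m ^ 2))
      ((m / 2 - myAtanh (m / 2) / β) / (β * m - myAtanh (m / 2))) with hc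
  set p := β * m with hp
  set u₀ := myAtanh (m / 2) with hu0
  have hx0 : (0:ℝ) < x := by linarith
  have hb : (0:ℝ) < x * (c / 2) := by positivity
  set E := Real.exp (-(x * Gaux β p) / 2) with hE
  have hEpos : 0 < E := Real.exp_pos _
  -- the majorant
  set maj : ℝ → ℝ := fun u => E * (|u - p| ^ ℓ * Real.exp (-(x * (c / 2) * (u - p) ^ 2))) with hmaj
  have hmajInt : Integrable maj := by
    have h1 : Integrable (fun u : ℝ => |u - p| ^ ℓ * Real.exp (-(x * (c / 2) * (u - p) ^ 2))) :=
      (my_integrable_moment ℓ hb).comp_sub_right p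
    exact h1.const_mul E
  have hptw : ∀ u ∈ Set.Ici u₀,
      |Real.tanh u - m| ^ ℓ * Real.exp (-(x * Gaux β u) / 2) ≤ maj u := by
    intro u hu
    have hlip : |Real.tanh u - m| ≤ |u - p| := by
      rw [← htanh]
      exact my_tanh_lipschitz u p
    have hexp : Real.exp (-(x * Gaux β u) / 2)
        ≤ E * Real.exp (-(x * (c / 2) * (u - p) ^ 2)) := by
      rw [hE, ← Real.exp_add]
      apply Real.exp_le_exp.mpr
      have hq := hquad u hu
      nlinarith [mul_le_mul_of_nonneg_left hq hx0.le]
    calc |Real.tanh u - m| ^ ℓ * Real.exp (-(x * Gaux β u) / 2)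
        ≤ |u - p| ^ ℓ * (E * Real.exp (-(x * (c / 2) * (u - p) ^ 2))) := by
          apply mul_le_mul (pow_le_pow_left₀ (abs_nonneg _) hlip ℓ) hexp
            (Real.exp_pos _).le (by positivity)
      _ = maj u := by rw [hmaj]; ring
  have hIntL : Integrable
      (fun u : ℝ => |Real.tanh u - m| ^ ℓ * Real.exp (-(x * Gaux β u) / 2)) := by
    apply Integrable.mono' ((my_integrable_exp_G β x hβ hx0).const_mul ((1 + m) ^ ℓ))
    · apply Continuous.aestronglyMeasurable
      exact (((my_continuous_tanh.sub continuous_const).abs.pow ℓ)).mul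
        (Real.continuous_exp.comp ((continuous_const.mul (my_continuous_G β)).neg.div_const 2))
    · refine Eventually.of_forall (fun u => ?_)
      rw [Real.norm_eq_abs, abs_of_nonneg (by positivity)]
      apply mul_le_mul_of_nonneg_right _ (Real.exp_pos _).le
      apply pow_le_pow_left₀ (abs_nonneg _)
      have h1 := my_tanh_lt_one u
      have h2 := my_neg_one_lt_tanh u
      rw [abs_le]
      constructor <;> nlinarith
  calc (∫ u in Set.Ici u₀, |Real.tanh u - m| ^ ℓ * Real.exp (-(x * Gaux β u) / 2))
      ≤ ∫ u in Set.Ici u₀, maj u :=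
        setIntegral_mono_on hIntL.integrableOn hmajInt.integrableOn measurableSet_Ici hptw
    _ ≤ ∫ u : ℝ, maj u := by
        apply setIntegral_le_integral hmajInt
        refine Eventually.of_forall (fun u => ?_)
        rw [hmaj]
        positivity
    _ = E * ∫ u : ℝ, |u - p| ^ ℓ * Real.exp (-(x * (c / 2) * (u - p) ^ 2)) := by
        rw [hmaj, MeasureTheory.integral_const_mul]
    _ = E * ∫ v : ℝ, |v| ^ ℓ * Real.exp (-(x * (c / 2) * v ^ 2)) := by
        rw [integral_sub_right_eq_self
          (fun v : ℝ => |v| ^ ℓ * Real.exp (-(x * (c / 2) * v ^ 2))) p]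
    _ = E * ((Real.sqrt (x * (c / 2)))⁻¹ ^ (ℓ + 1) *
          ∫ w : ℝ, |w| ^ ℓ * Real.exp (-(w ^ 2))) := by
        rw [my_moment_scale ℓ hb]

lemma my_nuN_integral (α : ℝ) (N : ℕ) (f : ℝ → ℝ) :
    (∫ t in Set.Icc (m / 2) 1, f t ∂(nuN α β N))
      = (ENNReal.ofReal (Zconst β ((N:ℝ)^α))).toReal⁻¹ *
        ∫ u in Set.Ici (myAtanh (m / 2)),
          f (Real.tanh u) * Real.exp (-(((N:ℝ)^α) * Gaux β u) / 2) := by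
  have hm1 : m < 1 := my_m_lt_one hβ hm htanh
  set x := (N:ℝ)^α with hx
  set rho : ℝ → ℝ := fun t => Real.exp (-(x * Fbeta β t) / 2) / (1 - t ^ 2) with hrho
  have hmeas : Measurable fun t => (rho t).toNNReal :=
    (my_measurable_rho β x).real_toNNReal
  have hset : Set.Icc (m/2) 1 ∩ Set.Ioo (-1:ℝ) 1 = Set.Ico (m/2) 1 := by
    ext t
    simp only [Set.mem_inter_iff, Set.mem_Icc, Set.mem_Ioo, Set.mem_Ico]
    constructor
    · rintro ⟨⟨h1, h2⟩, h3, h4⟩; exact ⟨h1, h4⟩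
    · rintro ⟨h1, h2⟩; exact ⟨⟨h1, h2.le⟩, by linarith, h2⟩
  have himg : Set.Ico (m/2) 1 = Real.tanh '' Set.Ici (myAtanh (m / 2)) := by
    rw [my_image_tanh_Ici, my_tanh_u0 hβ hm htanh]
  rw [nuN, Measure.restrict_smul, integral_smul_measure, smul_eq_mul,
    restrict_withDensity measurableSet_Icc, Measure.restrict_restrict measurableSet_Icc,
    hset, himg]
  have hcoe : (fun t => ENNReal.ofReal (rho t)) = fun t => ((rho t).toNNReal : ℝ≥0∞) := rfl
  have hwd := integral_withDensity_eq_integral_smul hmeas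
    (μ := volume.restrict (Real.tanh '' Set.Ici (myAtanh (m / 2)))) f
  rw [← hcoe] at hwd
  rw [show (fun t => ENNReal.ofReal (rexp (-(↑N ^ α * Fbeta β t) / 2) / (1 - t ^ 2)))
      = fun t => ENNReal.ofReal (rho t) from rfl, hwd]
  have hcongr : ∫ t in Real.tanh '' Set.Ici (myAtanh (m / 2)), (rho t).toNNReal • f t
      = ∫ t in Real.tanh '' Set.Ici (myAtanh (m / 2)), f t * rho t := by
    rw [← himg]
    refine setIntegral_congr_fun measurableSet_Ico (fun t ht => ?_)
    have h1 : 0 < 1 - t ^ 2 := by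
      rcases ht with ⟨ht1, ht2⟩
      nlinarith
    have h2 : 0 ≤ rho t := by
      rw [hrho]
      positivity
    rw [NNReal.smul_def, Real.coe_toNNReal _ h2, smul_eq_mul, mul_comm]
  rw [hcongr]
  have hsub := my_subst_apply β x (Set.Ici (myAtanh (m / 2))) measurableSet_Ici f
  simp only [hrho]
  rw [hsub, ENNReal.toReal_inv]

end Main

lemma my_pow_eq (α : ℝ) (ℓ N : ℕ) (hN : 1 ≤ N) :
    ((Real.sqrt ((N:ℝ) ^ α))⁻¹) ^ ℓ = (N:ℝ) ^ (-(α * ℓ) / 2) := by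
  have hN0 : (0:ℝ) < (N:ℝ) := by
    have : (1:ℝ) ≤ (N:ℝ) := by exact_mod_cast hN
    linarith
  have hx0 : (0:ℝ) < (N:ℝ) ^ α := Real.rpow_pos_of_pos hN0 α
  rw [Real.sqrt_eq_rpow, ← Real.rpow_neg hx0.le, ← Real.rpow_natCast (((N:ℝ)^α) ^ (-(1/2):ℝ)) ℓ,
    ← Real.rpow_mul hx0.le, ← Real.rpow_mul hN0.le]
  congr 1
  push_cast
  ring

/-- For `α > 0`, `β > 1`, every `ℓ ∈ ℕ`: there is `C_ℓ > 0` with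
`∫_{m/2}^1 |t-m|^ℓ dν_N(t) ≤ C_ℓ N^{-αℓ/2}` for all `N ≥ 1`. -/
theorem nuN_moment_bound (α β m : ℝ) (hα : 0 < α) (hβ : 1 < β)
    (hm : 0 < m) (htanh : Real.tanh (β * m) = m) (ℓ : ℕ) :
    ∃ C > 0, ∀ N : ℕ, 1 ≤ N →
      (∫ t in Set.Icc (m / 2) 1, |t - m| ^ ℓ ∂(nuN α β N)) ≤
        C * (N : ℝ) ^ (-(α * ℓ) / 2) := by
  obtain ⟨hcpos, -⟩ := my_quad hβ hm htanh
  set c := min (1 / β - (1 - m ^ 2))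
      ((m / 2 - myAtanh (m / 2) / β) / (β * m - myAtanh (m / 2))) with hc
  set Il := ∫ w : ℝ, |w| ^ ℓ * Real.exp (-(w ^ 2)) with hI
  have hInonneg : 0 ≤ Il := integral_nonneg fun w => by positivity
  set K := Real.exp (1/(2*β)) * ((Real.sqrt (c/2))⁻¹ ^ (ℓ+1) * Il) with hK
  have hβ0 : (0:ℝ) < β := by linarith
  have hKpos : 0 ≤ K := by positivity
  refine ⟨K + 1, by positivity, fun N hN => ?_⟩
  set x := (N:ℝ) ^ α with hx
  have hN1 : (1:ℝ) ≤ (N:ℝ) := by exact_mod_cast hN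
  have hx1 : (1:ℝ) ≤ x := by
    rw [hx, show (1:ℝ) = 1 ^ α from (Real.one_rpow α).symm]
    exact Real.rpow_le_rpow zero_le_one hN1 hα.le
  have hx0 : (0:ℝ) < x := by linarith
  have hsx : 0 < Real.sqrt x := Real.sqrt_pos.mpr hx0
  have hred := my_nuN_integral hβ hm htanh α N (fun t => |t - m| ^ ℓ)
  rw [← hx] at hred
  rw [hred]
  have hZpos := my_Z_pos hβ hm htanh hx1
  rw [ENNReal.toReal_ofReal hZpos.le]
  have hNum := my_Num_bound hβ hm htanh ℓ hx1
  rw [← hc] at hNum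
  have hZlow := my_Z_lower hβ hm htanh hx1
  set E := Real.exp (-(x * Gaux β (β * m)) / 2) with hE
  have hEpos : 0 < E := Real.exp_pos _
  have hNumnn : 0 ≤ ∫ u in Set.Ici (myAtanh (m / 2)),
      |Real.tanh u - m| ^ ℓ * Real.exp (-(x * Gaux β u) / 2) :=
    setIntegral_nonneg measurableSet_Ici fun u _ => by positivity
  have hpow : ((Real.sqrt x)⁻¹) ^ ℓ = (N:ℝ) ^ (-(α * ℓ) / 2) := by
    rw [hx]; exact my_pow_eq α ℓ N hN
  have step1 : (Zconst β x)⁻¹ * (∫ u in Set.Ici (myAtanh (m / 2)),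
        |Real.tanh u - m| ^ ℓ * Real.exp (-(x * Gaux β u) / 2))
      ≤ (Real.exp (-(1 / (2 * β))) * E * (Real.sqrt x)⁻¹)⁻¹ *
        (E * ((Real.sqrt (x * (c / 2)))⁻¹ ^ (ℓ + 1) * Il)) := by
    apply mul_le_mul _ hNum hNumnn (by positivity)
    exact inv_anti₀ (by positivity) hZlow
  have step2 : (Real.exp (-(1 / (2 * β))) * E * (Real.sqrt x)⁻¹)⁻¹ *
        (E * ((Real.sqrt (x * (c / 2)))⁻¹ ^ (ℓ + 1) * Il))
      = K * ((Real.sqrt x)⁻¹) ^ ℓ := by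
    have h1 : Real.sqrt (x * (c / 2)) = Real.sqrt x * Real.sqrt (c / 2) :=
      Real.sqrt_mul hx0.le _
    have h2 : (Real.exp (-(1 / (2 * β))))⁻¹ = Real.exp (1 / (2 * β)) := by
      rw [← Real.exp_neg, neg_neg]
    have hsc : 0 < Real.sqrt (c / 2) := Real.sqrt_pos.mpr (by positivity)
    have h3 : ((Real.sqrt x)⁻¹) ^ (ℓ + 1) = ((Real.sqrt x)⁻¹) ^ ℓ * (Real.sqrt x)⁻¹ :=
      pow_succ _ _
    rw [h1, hK, ← h2, mul_inv (Real.sqrt x) (Real.sqrt (c/2)), mul_pow, h3]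
    have e1 : Real.exp (-(1/(2*β))) ≠ 0 := (Real.exp_pos _).ne'
    have e2 : E ≠ 0 := hEpos.ne'
    have e3 : Real.sqrt x ≠ 0 := hsx.ne'
    have e4 : Real.sqrt (c/2) ≠ 0 := hsc.ne'
    field_simp
  calc (Zconst β x)⁻¹ * (∫ u in Set.Ici (myAtanh (m / 2)),
        |Real.tanh u - m| ^ ℓ * Real.exp (-(x * Gaux β u) / 2))
      ≤ K * ((Real.sqrt x)⁻¹) ^ ℓ := by rw [← step2]; exact step1
    _ ≤ (K + 1) * ((Real.sqrt x)⁻¹) ^ ℓ := by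
        apply mul_le_mul_of_nonneg_right (by linarith) (by positivity)
    _ = (K + 1) * (N:ℝ) ^ (-(α * ℓ) / 2) := by rw [hpow]
end
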